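/- Let f(t) = log(1 + e^{-t}). Then for all real r_l, r_s, γ: -(3r_l + 3r_s) + log(e^{3r_s + 3γ} + e^{3r_l}) + log(e^{3r_s} + e^{3r_l + 3γ}) ≤ 3·|r_l - r_s| + 2·log(1 + e^{3γ}). -/

import Mathlib

open Real

lemma aux_nonneg (d g : ℝ) (hd : 0 ≤ d) :
    Real.log (1 + Real.exp (-d + g)) + Real.log (1 + Real.exp (d + g)) ≤
      d + 2 * Real.log (1 + Real.exp g) := by
  have h1 : Real.log (1 + Real.exp (-d + g)) ≤ Real.log (1 + Real.exp g) := by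
    apply Real.log_le_log (by positivity)
    have : Real.exp (-d + g) ≤ Real.exp g := Real.exp_le_exp.mpr (by linarith)
    linarith
  have h2 : Real.log (1 + Real.exp (d + g)) ≤ d + Real.log (1 + Real.exp g) := by
    have hb : 1 + Real.exp (d + g) ≤ Real.exp d * (1 + Real.exp g) := by
      have h1 : (1:ℝ) ≤ Real.exp d := Real.one_le_exp hd
      have h2 : Real.exp (d + g) = Real.exp d * Real.exp g := Real.exp_add d g
      nlinarith [Real.exp_pos g]
    calc Real.log (1 + Real.exp (d + g)) ≤ Real.log (Real.exp d * (1 + Real.exp g)) :=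
          Real.log_le_log (by positivity) hb
      _ = d + Real.log (1 + Real.exp g) := by
          rw [Real.log_mul (Real.exp_ne_zero d) (by positivity), Real.log_exp]
  linarith

lemma aux (d g : ℝ) :
    Real.log (1 + Real.exp (-d + g)) + Real.log (1 + Real.exp (d + g)) ≤
      |d| + 2 * Real.log (1 + Real.exp g) := by
  rcases le_total 0 d with hd | hd
  · rw [abs_of_nonneg hd]; exact aux_nonneg d g hd
  · rw [abs_of_nonpos hd]
    have := aux_nonneg (-d) g (by linarith)
    simpa [neg_neg, add_comm] using this

theorem solopo_logsigmoid_explicit (r_l r_s γ : ℝ) :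
    -(3*r_l + 3*r_s) + Real.log (Real.exp (3*r_s + 3*γ) + Real.exp (3*r_l))
      + Real.log (Real.exp (3*r_s) + Real.exp (3*r_l + 3*γ)) ≤
    3 * |r_l - r_s| + 2 * Real.log (1 + Real.exp (3*γ)) := by
  set d := 3*r_l - 3*r_s with hd
  have e1 : Real.log (Real.exp (3*r_s + 3*γ) + Real.exp (3*r_l)) =
      3*r_l + Real.log (1 + Real.exp (-d + 3*γ)) := by
    rw [← Real.log_exp (3*r_l), ← Real.log_mul (Real.exp_ne_zero _) (by positivity)]
    congr 1
    rw [mul_add, ← Real.exp_add, mul_one, Real.log_exp]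
    rw [hd]
    ring_nf
  have e2 : Real.log (Real.exp (3*r_s) + Real.exp (3*r_l + 3*γ)) =
      3*r_s + Real.log (1 + Real.exp (d + 3*γ)) := by
    rw [← Real.log_exp (3*r_s), ← Real.log_mul (Real.exp_ne_zero _) (by positivity)]
    congr 1
    rw [mul_add, ← Real.exp_add, mul_one, Real.log_exp]
    rw [hd]
    ring_nf
  have habs : 3 * |r_l - r_s| = |d| := by
    rw [hd, show 3*r_l - 3*r_s = 3*(r_l - r_s) by ring, abs_mul]
    norm_num
  rw [e1, e2, habs]
  have := aux d (3*γ)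
  linarith
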